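/- (Exponential envelopes satisfy the tail regularity condition.) Let K > 1 and α > 0, and let f_α(i) = K·e^{−α i} for i ∈ X = {1,2,3,...} (f_α is summable, so the envelope distribution μ̃_{f_α} is well defined). Then limsup_{k→∞} ( ∑_{i ≥ k} f_α(i)·log₂(1/f_α(i)) ) / ( μ̃_{f_α}(T_k)·log₂(1/μ̃_{f_α}(T_k)) ) < ∞. -/

import Mathlib

open Filter Topology
open scoped ENNReal NNReal BigOperators

noncomputable section

/-- Block (single-letter) distortion `ρ_n` on `Fin n → α`. -/
def blockDist {α : Type*} (ρ : α → α → ℝ) (n : ℕ) (x y : Fin n → α) : ℝ :=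
  (∑ i, ρ (x i) (y i)) / n

/-- `π` is a (countable) partition: nonempty cells, every point in exactly one cell. -/
def IsPartition {α : Type*} (π : Set (Set α)) : Prop :=
  (∀ s ∈ π, s.Nonempty) ∧ ∀ x : α, ∃! s, s ∈ π ∧ x ∈ s

/-- `Q_n(d)`: partitions whose every cell contains a prototype within distortion `d`. -/
def QPart {α : Type*} (ρ : α → α → ℝ) (n : ℕ) (d : ℝ) (π : Set (Set (Fin n → α))) : Prop :=
  IsPartition π ∧ ∀ A ∈ π, ∃ y ∈ A, ∀ x ∈ A, blockDist ρ n x y ≤ d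

/-- Measure of a set under a pmf. -/
def measOf {α : Type*} (p : α → ℝ≥0∞) (s : Set α) : ℝ≥0∞ := ∑' x : s, p x.1

/-- `entTerm t = t·log₂(1/t) ∈ [0,∞]`, with the convention `0·log 0 = 0`. -/
def entTerm (t : ℝ≥0∞) : ℝ≥0∞ := ENNReal.ofReal (-(t.toReal * Real.logb 2 t.toReal))

/-- Entropy of `p` restricted to the σ-field generated by the partition `π` (base 2). -/
def Hpart {α : Type*} (π : Set (Set α)) (p : α → ℝ≥0∞) : ℝ≥0∞ :=
  ∑' A : π, entTerm (measOf p A.1)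

/-- Shannon entropy of a pmf (base 2). -/
def Hent {α : Type*} (p : α → ℝ≥0∞) : ℝ≥0∞ := ∑' x, entTerm (p x)

/-- Nonnegative per-cell KL term `(a log(a/b) − a + b)/log 2`; summed over a partition and
probability vectors (`∑ a = ∑ b = 1`) this gives exactly `∑ a log₂(a/b) ∈ [0,∞]` with the
usual conventions (`0·log(0/q) = 0`, `p·log(p/0) = ∞` for `p > 0`). -/
def klTerm (a b : ℝ≥0∞) : ℝ≥0∞ :=
  if a = 0 then ENNReal.ofReal (b.toReal / Real.log 2)
  else if b = 0 then ⊤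
  else ENNReal.ofReal
    ((a.toReal * Real.log (a.toReal / b.toReal) - a.toReal + b.toReal) / Real.log 2)

/-- Divergence `D_{σ(π)}(p‖q) ∈ [0,∞]` restricted to the cells of `π` (base 2). -/
def Dpart {α : Type*} (π : Set (Set α)) (p q : α → ℝ≥0∞) : ℝ≥0∞ :=
  ∑' A : π, klTerm (measOf p A.1) (measOf q A.1)

/-- `p` is a probability mass function. -/
def IsPMF {α : Type*} (p : α → ℝ≥0∞) : Prop := ∑' a, p a = 1

/-- `n`-fold i.i.d. product pmf `μ^n`. -/
def prodPMF {α : Type*} (p : α → ℝ≥0∞) (n : ℕ) : (Fin n → α) → ℝ≥0∞ :=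
  fun x => ∏ i, p (x i)

/-- `Λ^n = {μ^n : μ ∈ Λ}`. -/
def prodFam {α : Type*} (Λ : Set (α → ℝ≥0∞)) (n : ℕ) : Set ((Fin n → α) → ℝ≥0∞) :=
  (fun μ => prodPMF μ n) '' Λ

/-- Operational rate `R_n(d, μ_n) = inf_{π ∈ Q_n(d)} H_{σ(π)}(μ_n)/n`. -/
def opRate {α : Type*} (ρ : α → α → ℝ) (n : ℕ) (d : ℝ) (μn : (Fin n → α) → ℝ≥0∞) : ℝ≥0∞ :=
  ⨅ π ∈ {π | QPart ρ n d π}, Hpart π μn / (n : ℝ≥0∞)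

/-- Kraft inequality for a codeword-length function on `B`. -/
def Kraft {β : Type*} (B : Set β) (ℓ : β → ℕ) : Prop :=
  (∑' y : B, (2⁻¹ : ℝ≥0∞) ^ ℓ y.1) ≤ 1

/-- D-semifaithful code `ξ_n = (φ, ℓ)` of length `n` operating at distortion `d`. -/
def IsCode {α : Type*} (ρ : α → α → ℝ) (n : ℕ) (d : ℝ)
    (φ : (Fin n → α) → Fin n → α) (ℓ : (Fin n → α) → ℕ) : Prop :=
  (∀ x, blockDist ρ n x (φ x) ≤ d) ∧ (∀ y ∈ Set.range φ, φ y = y) ∧ Kraft (Set.range φ) ℓ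

/-- Rate (bits per letter) of the code `(φ, ℓ)` under `μn`. -/
def codeRate {α : Type*} {n : ℕ} (φ : (Fin n → α) → Fin n → α) (ℓ : (Fin n → α) → ℕ)
    (μn : (Fin n → α) → ℝ≥0∞) : ℝ≥0∞ :=
  (∑' x, μn x * (ℓ (φ x) : ℝ≥0∞)) / (n : ℝ≥0∞)

/-- Partition of the block space induced by a quantizer. -/
def codePart {α : Type*} {n : ℕ} (φ : (Fin n → α) → Fin n → α) : Set (Set (Fin n → α)) :=
  {s | ∃ y ∈ Set.range φ, s = φ ⁻¹' {y}}

/-- Information radius `R⁺(Λn, σ(π)) = inf_v sup_{μn ∈ Λn} D_{σ(π)}(μn‖v)`. -/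
def Rplus {β : Type*} (Λn : Set (β → ℝ≥0∞)) (π : Set (Set β)) : ℝ≥0∞ :=
  ⨅ v : {v : β → ℝ≥0∞ // IsPMF v}, ⨆ μn ∈ Λn, Dpart π μn v.1

/-- A distortion function: nonnegative and positive off the diagonal. -/
def IsDistortion {α : Type*} (ρ : α → α → ℝ) : Prop :=
  (∀ x y, 0 ≤ ρ x y) ∧ ∀ x y, x ≠ y → 0 < ρ x y

/-- Unbounded distortion consistent w.r.t. the Euclidean norm on the alphabet ℕ. -/
def ConsistentUnbounded (ρ : ℕ → ℕ → ℝ) : Prop :=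
  ∀ K : ℝ, 0 < K → ∃ ε : ℝ, 0 < ε ∧ ∀ i j : ℕ, ε ≤ |(i : ℝ) - (j : ℝ)| → K ≤ ρ i j

/-- Envelope family `Λ_f`. -/
def envFam (f : ℕ → ℝ≥0) : Set (ℕ → ℝ≥0∞) :=
  {p | IsPMF p ∧ ∀ x, p x ≤ (f x : ℝ≥0∞)}

/-- Tail set `T_k = {k, k+1, ...}`. -/
def Tset (k : ℕ) : Set ℕ := {x | k ≤ x}

/-- Tail sum of the envelope `∑_{x ≥ k} f(x)`. -/
def tailF (f : ℕ → ℝ≥0) (k : ℕ) : ℝ≥0∞ := ∑' x : Tset k, (f x.1 : ℝ≥0∞)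

/-- `τ_f = min{k ≥ 1 : ∑_{x ≥ k} f(x) ≤ 1}`. -/
def tauF (f : ℕ → ℝ≥0) : ℕ := sInf {k | 1 ≤ k ∧ tailF f k ≤ 1}

/-- The envelope distribution `μ̃_f`. -/
def mutilde (f : ℕ → ℝ≥0) : ℕ → ℝ≥0∞ := fun x =>
  if tauF f ≤ x then (f x : ℝ≥0∞)
  else if x = tauF f - 1 then 1 - tailF f (tauF f)
  else 0

/-- `u_f(n) = min{k ≥ 1 : μ̃_f(T_{k+1}) < 1/n}`. -/
def ufn (f : ℕ → ℝ≥0) (n : ℕ) : ℕ :=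
  sInf {k | 1 ≤ k ∧ measOf (mutilde f) (Tset (k + 1)) < (n : ℝ≥0∞)⁻¹}

/-- Tail-partition entropy `H_{σ(π̃_k)}(p)` for the partition `π̃_k = {Γ_k, {k+1}, {k+2}, ...}`. -/
def Htail (k : ℕ) (p : ℕ → ℝ≥0∞) : ℝ≥0∞ :=
  entTerm (measOf p (Set.Iic k)) + ∑' x : Tset (k + 1), entTerm (p x.1)


namespace ExpEnvAux

def tailEquiv (k : ℕ) : ℕ ≃ Tset k where
  toFun j := ⟨k + j, Nat.le_add_right k j⟩
  invFun x := x.1 - k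
  left_inv j := by simp
  right_inv x := by
    ext
    exact Nat.add_sub_cancel' x.2

lemma tsum_tail (g : ℕ → ℝ≥0∞) (k : ℕ) :
    (∑' x : Tset k, g x.1) = ∑' j : ℕ, g (k + j) :=
  ((tailEquiv k).tsum_eq (fun x : Tset k => g x.1)).symm

lemma entTerm_ofReal (r : ℝ) (hr : 0 ≤ r) :
    entTerm (ENNReal.ofReal r) = ENNReal.ofReal (-(r * Real.logb 2 r)) := by
  rw [entTerm, ENNReal.toReal_ofReal hr]

end ExpEnvAux

set_option maxHeartbeats 1000000

/-- Exponential envelopes satisfy the tail regularity condition: for `K > 1`,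
`α > 0` and `f_α(i) = K·e^{−α i}`,
`limsup_k (∑_{i ≥ k} f_α(i)·log₂(1/f_α(i))) / (μ̃_{f_α}(T_k)·log₂(1/μ̃_{f_α}(T_k))) < ∞`. -/
theorem exponential_envelope_tail_regularity (K α : ℝ) (hK : 1 < K) (hα : 0 < α) :
    Filter.limsup (fun k : ℕ =>
        (∑' i : Tset k, entTerm ((Real.toNNReal (K * Real.exp (-α * (i.1 : ℝ))) : ℝ≥0∞)))
          / entTerm (measOf
              (mutilde (fun i : ℕ => Real.toNNReal (K * Real.exp (-α * (i : ℝ)))))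
              (Tset k)))
      atTop < ⊤ := by
  have hK0 : 0 < K := lt_trans one_pos hK
  set a : ℝ := Real.exp (-α) with ha_def
  have ha0 : 0 < a := Real.exp_pos _
  have ha1 : a < 1 := Real.exp_lt_one_iff.mpr (by linarith)
  have hla : Real.log a = -α := Real.log_exp _
  have h1a : 0 < 1 - a := by linarith
  set c : ℝ := K / (1 - a) with hc_def
  have hc0 : 0 < c := div_pos hK0 h1a
  have l2 : (0:ℝ) < Real.log 2 := Real.log_pos one_lt_two
  have lK : 0 < Real.log K := Real.log_pos hK
  set f : ℕ → ℝ≥0 := fun i : ℕ => Real.toNNReal (K * Real.exp (-α * (i : ℝ))) with hf_def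
  have hexp : ∀ i : ℕ, K * Real.exp (-α * (i : ℝ)) = K * a ^ i := by
    intro i
    have h : -α * (i : ℝ) = (i : ℝ) * (-α) := by ring
    rw [h, Real.exp_nat_mul]
  have hfc : ∀ i : ℕ, ((f i : ℝ≥0) : ℝ≥0∞) = ENNReal.ofReal (K * a ^ i) := by
    intro i
    rw [hf_def]
    show ENNReal.ofReal (K * Real.exp (-α * (i : ℝ))) = _
    rw [hexp]
  -- tail sums
  have tail_sum : ∀ k : ℕ, (∑' x : Tset k, ENNReal.ofReal (K * a ^ x.1))
      = ENNReal.ofReal (c * a ^ k) := by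
    intro k
    rw [ExpEnvAux.tsum_tail (fun x => ENNReal.ofReal (K * a ^ x)) k]
    have hsum : Summable (fun j : ℕ => (K * a ^ k) * a ^ j) :=
      (summable_geometric_of_lt_one ha0.le ha1).mul_left _
    calc ∑' j : ℕ, ENNReal.ofReal (K * a ^ (k + j))
        = ∑' j : ℕ, ENNReal.ofReal ((K * a ^ k) * a ^ j) := by
          apply tsum_congr; intro j; rw [pow_add, mul_assoc]
      _ = ENNReal.ofReal (∑' j : ℕ, (K * a ^ k) * a ^ j) :=
          (ENNReal.ofReal_tsum_of_nonneg (fun j => by positivity) hsum).symm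
      _ = ENNReal.ofReal (c * a ^ k) := by
          rw [tsum_mul_left, tsum_geometric_of_lt_one ha0.le ha1, hc_def]
          congr 1
          ring
  have tailF_eq : ∀ k : ℕ, tailF f k = ENNReal.ofReal (c * a ^ k) := by
    intro k
    rw [tailF]
    exact (tsum_congr fun x : Tset k => hfc x.1).trans (tail_sum k)
  -- tau exists
  have htau_mem : tauF f ∈ {k : ℕ | 1 ≤ k ∧ tailF f k ≤ 1} := by
    apply Nat.sInf_mem
    obtain ⟨n, hn⟩ := exists_pow_lt_of_lt_one (show (0:ℝ) < 1/c by positivity) ha1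
    refine ⟨max n 1, le_max_right _ _, ?_⟩
    rw [tailF_eq]
    have h2 : a ^ max n 1 ≤ a ^ n := pow_le_pow_of_le_one ha0.le ha1.le (le_max_left _ _)
    have hle : c * a ^ max n 1 ≤ 1 := by
      have hcn : c * a ^ n ≤ 1 := by
        have h := (lt_div_iff₀ hc0).mp hn
        nlinarith
      nlinarith [pow_pos ha0 (max n 1)]
    exact ENNReal.ofReal_le_one.mpr hle
  have meas_eq : ∀ k : ℕ, tauF f ≤ k →
      measOf (mutilde f) (Tset k) = ENNReal.ofReal (c * a ^ k) := by
    intro k hk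
    have h : ∀ x : Tset k, mutilde f x.1 = ENNReal.ofReal (K * a ^ x.1) := by
      intro x
      rw [mutilde, if_pos (le_trans hk x.2)]
      exact hfc x.1
    calc measOf (mutilde f) (Tset k)
        = ∑' x : Tset k, ENNReal.ofReal (K * a ^ x.1) := tsum_congr h
      _ = ENNReal.ofReal (c * a ^ k) := tail_sum k
  -- the constant S
  have hS_sum : Summable (fun j : ℕ => ((j : ℝ) + 1) * a ^ j) := by
    have h1 : Summable (fun j : ℕ => (j : ℝ) ^ 1 * a ^ j) :=
      summable_pow_mul_geometric_of_norm_lt_one 1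
        (by rw [Real.norm_eq_abs, abs_of_pos ha0]; exact ha1)
    have h2 : Summable (fun j : ℕ => a ^ j) := summable_geometric_of_lt_one ha0.le ha1
    exact (h1.add h2).congr (fun j => by rw [pow_one]; ring)
  set S : ℝ≥0∞ := ∑' j : ℕ, ENNReal.ofReal (((j : ℝ) + 1) * a ^ j) with hS_def
  have hS_top : S ≠ ⊤ := by
    rw [hS_def, ← ENNReal.ofReal_tsum_of_nonneg (fun j => by positivity) hS_sum]
    exact ENNReal.ofReal_ne_top
  -- termwise numerator bound
  have term_bd : ∀ k j : ℕ, entTerm (ENNReal.ofReal (K * a ^ (k + j)))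
      ≤ ENNReal.ofReal ((K * α / Real.log 2) * ((k : ℝ) + 1) * a ^ k)
        * ENNReal.ofReal (((j : ℝ) + 1) * a ^ j) := by
    intro k j
    rw [← ENNReal.ofReal_mul (by positivity)]
    rw [ExpEnvAux.entTerm_ofReal _ (by positivity)]
    apply ENNReal.ofReal_le_ofReal
    have hlog : Real.logb 2 (K * a ^ (k + j))
        = (Real.log K - ((k : ℝ) + (j : ℝ)) * α) / Real.log 2 := by
      rw [Real.logb, Real.log_mul (ne_of_gt hK0) (ne_of_gt (pow_pos ha0 _)),
        Real.log_pow, hla]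
      push_cast
      ring
    rw [hlog]
    have key : -(K * a ^ (k + j) * ((Real.log K - ((k : ℝ) + (j : ℝ)) * α) / Real.log 2))
        = (K * a ^ (k + j) * (((k : ℝ) + (j : ℝ)) * α - Real.log K)) / Real.log 2 := by
      ring
    have rhs_eq : (K * α / Real.log 2) * ((k : ℝ) + 1) * a ^ k * (((j : ℝ) + 1) * a ^ j)
        = (K * (a ^ k * a ^ j) * (((k : ℝ) + 1) * ((j : ℝ) + 1) * α)) / Real.log 2 := by
      ring
    rw [key, rhs_eq, pow_add, div_le_div_iff_of_pos_right l2]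
    have hkj : ((k : ℝ) + (j : ℝ)) ≤ ((k : ℝ) + 1) * ((j : ℝ) + 1) := by
      nlinarith [Nat.cast_nonneg (α := ℝ) k, Nat.cast_nonneg (α := ℝ) j]
    have hmono : ((k : ℝ) + (j : ℝ)) * α - Real.log K ≤ ((k : ℝ) + 1) * ((j : ℝ) + 1) * α := by
      have h := mul_le_mul_of_nonneg_right hkj hα.le
      linarith
    have hKA : 0 ≤ K * (a ^ k * a ^ j) := by positivity
    exact mul_le_mul_of_nonneg_left hmono hKA
  have num_bd : ∀ k : ℕ, (∑' i : Tset k, entTerm (ENNReal.ofReal (K * a ^ i.1)))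
      ≤ ENNReal.ofReal ((K * α / Real.log 2) * ((k : ℝ) + 1) * a ^ k) * S := by
    intro k
    rw [ExpEnvAux.tsum_tail (fun i => entTerm (ENNReal.ofReal (K * a ^ i))) k]
    calc ∑' j : ℕ, entTerm (ENNReal.ofReal (K * a ^ (k + j)))
        ≤ ∑' j : ℕ, ENNReal.ofReal ((K * α / Real.log 2) * ((k : ℝ) + 1) * a ^ k)
            * ENNReal.ofReal (((j : ℝ) + 1) * a ^ j) := ENNReal.tsum_le_tsum (term_bd k)
      _ = _ := ENNReal.tsum_mul_left
  -- denominator lower bound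
  set q : ℝ := c * α / (2 * Real.log 2) with hq_def
  have hq0 : 0 < q := by positivity
  have den_bd : ∀ k : ℕ, tauF f ≤ k → 2 * Real.log c ≤ α * k →
      ENNReal.ofReal (q * ((k : ℝ) * a ^ k))
        ≤ entTerm (measOf (mutilde f) (Tset k)) := by
    intro k hk hk2
    rw [meas_eq k hk, ExpEnvAux.entTerm_ofReal _ (by positivity)]
    apply ENNReal.ofReal_le_ofReal
    have hlog : Real.logb 2 (c * a ^ k) = (Real.log c - (k : ℝ) * α) / Real.log 2 := by
      rw [Real.logb, Real.log_mul (ne_of_gt hc0) (ne_of_gt (pow_pos ha0 _)),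
        Real.log_pow, hla]
      ring
    rw [hlog]
    have h1 : -(c * a ^ k * ((Real.log c - (k : ℝ) * α) / Real.log 2))
        = (c * a ^ k * ((k : ℝ) * α - Real.log c)) / Real.log 2 := by ring
    have h2 : q * ((k : ℝ) * a ^ k) = (c * a ^ k * ((k : ℝ) * α / 2)) / Real.log 2 := by
      rw [hq_def]; ring
    rw [h1, h2, div_le_div_iff_of_pos_right l2]
    have hcak : 0 ≤ c * a ^ k := by positivity
    have : (k : ℝ) * α / 2 ≤ (k : ℝ) * α - Real.log c := by
      rw [mul_comm] at hk2
      linarith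
    exact mul_le_mul_of_nonneg_left this hcak
  -- the constant C
  set C : ℝ≥0∞ := ENNReal.ofReal (2 * K * α / Real.log 2 / q) * S with hC_def
  have hC_top : C ≠ ⊤ := ENNReal.mul_ne_top ENNReal.ofReal_ne_top hS_top
  have hev : ∀ᶠ k : ℕ in atTop,
      (∑' i : Tset k, entTerm ((Real.toNNReal (K * Real.exp (-α * (i.1 : ℝ))) : ℝ≥0∞)))
        / entTerm (measOf (mutilde f) (Tset k)) ≤ C := by
    rw [Filter.eventually_atTop]
    refine ⟨max (max (tauF f) 1) ⌈2 * Real.log c / α⌉₊, fun k hk => ?_⟩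
    have hkτ : tauF f ≤ k := le_trans (le_trans (le_max_left _ _) (le_max_left _ _)) hk
    have hk1 : 1 ≤ k := le_trans (le_trans (le_max_right _ _) (le_max_left _ _)) hk
    have hk1R : (1 : ℝ) ≤ (k : ℝ) := by exact_mod_cast hk1
    have hk2 : 2 * Real.log c ≤ α * k := by
      have h := Nat.le_ceil (2 * Real.log c / α)
      have h2 : ((⌈2 * Real.log c / α⌉₊ : ℕ) : ℝ) ≤ (k : ℝ) :=
        Nat.cast_le.mpr (le_trans (le_max_right _ _) hk)
      have h3 : 2 * Real.log c / α ≤ (k : ℝ) := le_trans h h2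
      calc 2 * Real.log c = (2 * Real.log c / α) * α := by field_simp
        _ ≤ (k : ℝ) * α := mul_le_mul_of_nonneg_right h3 hα.le
        _ = α * k := mul_comm _ _
    have hden_lb := den_bd k hkτ hk2
    have hden_ne0 : entTerm (measOf (mutilde f) (Tset k)) ≠ 0 := by
      intro h0
      rw [h0, le_zero_iff, ENNReal.ofReal_eq_zero, not_lt.symm] at hden_lb
      exact hden_lb (by positivity)
    have hden_ne_top : entTerm (measOf (mutilde f) (Tset k)) ≠ ⊤ := by
      rw [entTerm]; exact ENNReal.ofReal_ne_top
    rw [ENNReal.div_le_iff_le_mul (Or.inl hden_ne0) (Or.inl hden_ne_top)]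
    have num_congr : (∑' i : Tset k,
        entTerm ((Real.toNNReal (K * Real.exp (-α * (i.1 : ℝ))) : ℝ≥0∞)))
        = ∑' i : Tset k, entTerm (ENNReal.ofReal (K * a ^ i.1)) := by
      apply tsum_congr
      intro i
      congr 1
      rw [← hexp i.1]
      rfl
    rw [num_congr]
    calc (∑' i : Tset k, entTerm (ENNReal.ofReal (K * a ^ i.1)))
        ≤ ENNReal.ofReal ((K * α / Real.log 2) * ((k : ℝ) + 1) * a ^ k) * S := num_bd k
      _ ≤ (ENNReal.ofReal (2 * K * α / Real.log 2 / q)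
            * ENNReal.ofReal (q * ((k : ℝ) * a ^ k))) * S := by
          apply mul_le_mul_left
          rw [← ENNReal.ofReal_mul (by positivity)]
          apply ENNReal.ofReal_le_ofReal
          have hcancel : (2 * K * α / Real.log 2 / q) * (q * ((k : ℝ) * a ^ k))
              = (2 * K * α / Real.log 2) * ((k : ℝ) * a ^ k) := by
            field_simp
          rw [hcancel]
          have hk2' : ((k : ℝ) + 1) ≤ 2 * (k : ℝ) := by linarith
          have hpos : (0 : ℝ) < K * α / Real.log 2 := by positivity
          calc K * α / Real.log 2 * ((k : ℝ) + 1) * a ^ k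
              ≤ K * α / Real.log 2 * (2 * (k : ℝ)) * a ^ k :=
                mul_le_mul_of_nonneg_right
                  (mul_le_mul_of_nonneg_left hk2' hpos.le) (pow_pos ha0 k).le
            _ = 2 * K * α / Real.log 2 * ((k : ℝ) * a ^ k) := by ring
      _ = C * ENNReal.ofReal (q * ((k : ℝ) * a ^ k)) := by rw [hC_def]; ring
      _ ≤ C * entTerm (measOf (mutilde f) (Tset k)) := mul_le_mul_right hden_lb C
  calc Filter.limsup _ atTop ≤ C := Filter.limsup_le_of_le (by isBoundedDefault) hev
    _ < ⊤ := Ne.lt_top hC_top
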